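/- Let G be a compact Lie group acting orthogonally on V, let Ω ⊂ V be open and G-invariant, and suppose all points of Ω have the same orbit type (H), i.e., Ω = Ω_{(H)}. Let φ ∈ C²_G(Ω, ℝ) and v₀ ∈ Ω a critical point of φ. Then with respect to the decomposition T_{v₀}Ω = T_{v₀}G(v₀) ⊕ (T_{v₀}Ω ⊖ T_{v₀}G(v₀)), the Hessian has the block form ∇²φ(v₀) = diag(0, B(v₀)); in particular the block C(v₀) is absent and ker ∇²φ(v₀) ⊇ T_{v₀}G(v₀). -/

import Mathlib

/-- The set of tangent vectors at `v₀` to the orbit `G(v₀)`, described as derivatives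
at `0` of curves with values in the orbit passing through `v₀` at time `0`. -/
def orbitTangentSet {G : Type*} [Group G] {n : ℕ}
    (ρ : G →* (EuclideanSpace ℝ (Fin n) ≃ₗᵢ[ℝ] EuclideanSpace ℝ (Fin n)))
    (v₀ : EuclideanSpace ℝ (Fin n)) : Set (EuclideanSpace ℝ (Fin n)) :=
  {d | ∃ c : ℝ → EuclideanSpace ℝ (Fin n),
        c 0 = v₀ ∧ (∀ t, ∃ g : G, c t = ρ g v₀) ∧ HasDerivAt c d 0}

/-- Let `G` be a compact Lie group acting orthogonally on `V = ℝⁿ`,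
`Ω ⊆ V` open and `G`-invariant, with all points of `Ω` of the same orbit type `(H)`
(all isotropy groups conjugate to `H`). For `φ ∈ C²_G(Ω, ℝ)` and a critical point
`v₀ ∈ Ω`, with respect to `T_{v₀}Ω = T_{v₀}G(v₀) ⊕ (T_{v₀}Ω ⊖ T_{v₀}G(v₀))` the
Hessian has the block form `diag(0, B(v₀))`: it vanishes on `T_{v₀}G(v₀)` (so
`ker ∇²φ(v₀) ⊇ T_{v₀}G(v₀)`) and preserves the orthogonal complement; the block
`C(v₀)` is absent. -/
abbrev Vn (n : ℕ) := EuclideanSpace ℝ (Fin n)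

open InnerProductSpace RealInnerProductSpace

theorem hessian_block_single_orbit_type
    {G : Type*} [Group G] [TopologicalSpace G] [IsTopologicalGroup G] [CompactSpace G]
    {n : ℕ}
    (ρ : G →* (EuclideanSpace ℝ (Fin n) ≃ₗᵢ[ℝ] EuclideanSpace ℝ (Fin n)))
    (hρ : Continuous fun p : G × EuclideanSpace ℝ (Fin n) => ρ p.1 p.2)
    (Ω : Set (EuclideanSpace ℝ (Fin n))) (hΩ : IsOpen Ω)
    (hΩinv : ∀ (g : G), ∀ v ∈ Ω, ρ g v ∈ Ω)
    (H : Subgroup G)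
    (horbtype : ∀ v ∈ Ω, ∃ g : G, ∀ x : G, ρ x v = v ↔ g * x * g⁻¹ ∈ H)
    (φ : EuclideanSpace ℝ (Fin n) → ℝ) (hφ : ContDiff ℝ 2 φ)
    (hinv : ∀ (g : G) v, φ (ρ g v) = φ v)
    (v₀ : EuclideanSpace ℝ (Fin n)) (hv₀ : v₀ ∈ Ω) (hcrit : gradient φ v₀ = 0) :
    (∀ d ∈ orbitTangentSet ρ v₀, fderiv ℝ (gradient φ) v₀ d = 0) ∧
    (∀ d ∈ Submodule.span ℝ (orbitTangentSet ρ v₀),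
      d ∈ LinearMap.ker (fderiv ℝ (gradient φ) v₀ :
        EuclideanSpace ℝ (Fin n) →ₗ[ℝ] EuclideanSpace ℝ (Fin n))) ∧
    (∀ w ∈ (Submodule.span ℝ (orbitTangentSet ρ v₀))ᗮ,
      fderiv ℝ (gradient φ) v₀ w ∈ (Submodule.span ℝ (orbitTangentSet ρ v₀))ᗮ) := by
  have hφ1 : Differentiable ℝ φ := hφ.differentiable two_ne_zero
  -- the continuous-linear version of `(toDual ℝ (Vn n)).symm`
  let e : ((Vn n) →L[ℝ] ℝ) ≃ₗᵢ[ℝ] (Vn n) := (toDual ℝ (Vn n)).symm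
  have hgradeq : gradient φ = fun x => (e.toContinuousLinearEquiv :
      ((Vn n) →L[ℝ] ℝ) →L[ℝ] (Vn n)) (fderiv ℝ φ x) := rfl
  -- the Fréchet derivative vanishes at v₀
  have hf0 : fderiv ℝ φ v₀ = 0 := by
    have h := hcrit
    unfold gradient at h
    exact ((toDual ℝ (Vn n)).symm.map_eq_zero_iff).mp h
  -- the gradient vanishes on the whole orbit
  have grad0 : ∀ g : G, gradient φ (ρ g v₀) = 0 := by
    intro g
    have hφe : φ = φ ∘ (fun x => ρ g⁻¹ x) := by
      funext x; exact (hinv g⁻¹ x).symm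
    have he : HasFDerivAt (fun x : (Vn n) => ρ g⁻¹ x)
        ((ρ g⁻¹).toContinuousLinearEquiv : (Vn n) →L[ℝ] (Vn n)) (ρ g v₀) :=
      ((ρ g⁻¹).toContinuousLinearEquiv : (Vn n) →L[ℝ] (Vn n)).hasFDerivAt
    have hφv₀ : HasFDerivAt φ (0 : (Vn n) →L[ℝ] ℝ) v₀ := by
      simpa [hf0] using (hφ1 v₀).hasFDerivAt
    have hfix : ρ g⁻¹ (ρ g v₀) = v₀ := by
      have h2 : ρ (g⁻¹ * g) v₀ = v₀ := by simp
      calc ρ g⁻¹ (ρ g v₀) = ρ (g⁻¹ * g) v₀ := by rw [map_mul]; rfl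
        _ = v₀ := h2
    have hφv₀' : HasFDerivAt φ (0 : (Vn n) →L[ℝ] ℝ) (ρ g⁻¹ (ρ g v₀)) := by
      rw [hfix]; exact hφv₀
    have hcomp : HasFDerivAt (φ ∘ fun x : (Vn n) => ρ g⁻¹ x)
        ((0 : (Vn n) →L[ℝ] ℝ).comp ((ρ g⁻¹).toContinuousLinearEquiv : (Vn n) →L[ℝ] (Vn n))) (ρ g v₀) :=
      hφv₀'.comp (ρ g v₀) he
    rw [← hφe, ContinuousLinearMap.zero_comp] at hcomp
    unfold gradient
    rw [hcomp.fderiv, map_zero]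
  -- gradient is C¹
  have hfd : ContDiff ℝ 1 (fderiv ℝ φ) := hφ.fderiv_right (by norm_num)
  have hgrad : ContDiff ℝ 1 (gradient φ) := by
    rw [hgradeq]
    exact ((e.toContinuousLinearEquiv : ((Vn n) →L[ℝ] ℝ) →L[ℝ] (Vn n)).contDiff).comp hfd
  have hgraddiff : DifferentiableAt ℝ (gradient φ) v₀ :=
    (hgrad.differentiable one_ne_zero) v₀
  set A := fderiv ℝ (gradient φ) v₀ with hA
  -- Part 1
  have part1 : ∀ d ∈ orbitTangentSet ρ v₀, A d = 0 := by
    rintro d ⟨c, hc0, horb, hder⟩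
    have hzero : (fun t => gradient φ (c t)) = fun _ => (0 : (Vn n)) := by
      funext t
      obtain ⟨g, hg⟩ := horb t
      rw [hg, grad0]
    have hF : HasFDerivAt (gradient φ) A (c 0) := by
      rw [hc0]; exact hgraddiff.hasFDerivAt
    have h1 : HasDerivAt (fun t => gradient φ (c t)) (A d) 0 :=
      hF.comp_hasDerivAt 0 hder
    have h2 : HasDerivAt (fun t => gradient φ (c t)) (0 : (Vn n)) 0 := by
      rw [hzero]; exact hasDerivAt_const 0 0
    exact h1.unique h2
  have part2 : ∀ d ∈ Submodule.span ℝ (orbitTangentSet ρ v₀),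
      d ∈ LinearMap.ker (A : (Vn n) →ₗ[ℝ] (Vn n)) := by
    have hle : Submodule.span ℝ (orbitTangentSet ρ v₀) ≤ LinearMap.ker (A : (Vn n) →ₗ[ℝ] (Vn n)) := by
      rw [Submodule.span_le]
      intro d hd
      simpa [LinearMap.mem_ker] using part1 d hd
    exact fun d hd => hle hd
  refine ⟨part1, part2, ?_⟩
  -- symmetry of the Hessian
  intro w hw
  set B := fderiv ℝ (fderiv ℝ φ) v₀ with hB
  have hAB : ∀ v : (Vn n), A v = (toDual ℝ (Vn n)).symm (B v) := by
    have hB' : HasFDerivAt (fderiv ℝ φ) B v₀ :=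
      ((hfd.differentiable one_ne_zero) v₀).hasFDerivAt
    have hcomp : HasFDerivAt
        (fun x => (e.toContinuousLinearEquiv : ((Vn n) →L[ℝ] ℝ) →L[ℝ] (Vn n)) (fderiv ℝ φ x))
        ((e.toContinuousLinearEquiv : ((Vn n) →L[ℝ] ℝ) →L[ℝ] (Vn n)).comp B) v₀ :=
      ((e.toContinuousLinearEquiv : ((Vn n) →L[ℝ] ℝ) →L[ℝ] (Vn n)).hasFDerivAt).comp v₀ hB'
    rw [← hgradeq] at hcomp
    intro v
    rw [hA, hcomp.fderiv]
    rfl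
  have hsymm : ∀ v u : (Vn n), B v u = B u v := fun v u =>
    second_derivative_symmetric (fun y => (hφ1 y).hasFDerivAt)
      ((hfd.differentiable one_ne_zero) v₀).hasFDerivAt v u
  have hinnerA : ∀ v u : (Vn n), ⟪A v, u⟫ = ⟪A u, v⟫ := by
    intro v u
    rw [hAB v, hAB u, toDual_symm_apply, toDual_symm_apply, hsymm]
  rw [Submodule.mem_orthogonal]
  intro d hd
  have hAd : A d = 0 := by simpa [LinearMap.mem_ker] using part2 d hd
  calc ⟪d, A w⟫ = ⟪A w, d⟫ := real_inner_comm _ _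
    _ = ⟪A d, w⟫ := hinnerA w d
    _ = 0 := by rw [hAd, inner_zero_left]
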